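/- Let b ≥ 2 and N ≥ 1 be integers and let A = (a_0, …, a_{b-1}) be a zero-sum vector of complex numbers. Define, for 0 ≤ n ≤ b^N - 1, c_n := ∑_{k ⪯ n} a_{u_b(k)}, the sum over all non-negative integers k digitally dominated by n in base b. Then: (i) ∑_{n=0}^{b^N-1} a_{u_b(n)} x^n = (∑_{n=0}^{b^N-1} c_n x^n) · ∏_{m=0}^{N-1} (1 - x^{b^m}) as polynomials; and (ii) c_n = 0 for every n whose base-b expansion contains the digit b-1. -/

import Mathlib

/-- `ptm b n` is the generalized Prouhet–Thue–Morse sequence `u_b(n)`: the sum of the base-`b`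
digits of `n`, reduced modulo `b`. -/
def ptm (b n : ℕ) : ℕ := (Nat.digits b n).sum % b

/-- `dig b n i` is the `i`-th digit of `n` in base `b`. -/
def dig (b n i : ℕ) : ℕ := n / b ^ i % b

namespace PtmAux

open Finset Polynomial

/-- digit sum cast into `ZMod b` -/
def uz (b n : ℕ) : ZMod b := ((Nat.digits b n).sum : ZMod b)

open Classical in
/-- the set of `k` digitally dominated by `n` -/
noncomputable def domset (b n : ℕ) : Finset ℕ :=
  (Finset.range (n + 1)).filter (fun k => ∀ i, dig b k i ≤ dig b n i)

/-- shift of a vector -/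
def sh {b : ℕ} (e : ℕ) (A : ZMod b → ℂ) : ZMod b → ℂ := fun z => A (z + e)

variable {b : ℕ}

lemma dig_zero (n : ℕ) : dig b n 0 = n % b := by simp [dig]

lemma dig_succ (n i : ℕ) : dig b n (i + 1) = dig b (n / b) i := by
  simp [dig, pow_succ', Nat.div_div_eq_div_mul]

lemma dig_of_lt {n i : ℕ} (h : n < b ^ i) : dig b n i = 0 := by
  simp [dig, Nat.div_eq_of_lt h]

lemma le_of_dom (hb : 2 ≤ b) : ∀ k n : ℕ, (∀ i, dig b k i ≤ dig b n i) → k ≤ n := by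
  intro k
  induction k using Nat.strong_induction_on with
  | _ k ih =>
    intro n h
    rcases Nat.eq_zero_or_pos k with rfl | hk
    · exact Nat.zero_le n
    · have h0 : k % b ≤ n % b := by simpa [dig_zero] using h 0
      have hq : k / b ≤ n / b := by
        refine ih (k / b) (Nat.div_lt_self hk (by omega)) (n / b) (fun i => ?_)
        simpa [dig_succ] using h (i + 1)
      have e1 := Nat.div_add_mod k b
      have e2 := Nat.div_add_mod n b
      have := Nat.mul_le_mul_left b hq
      omega

lemma mem_domset (hb : 2 ≤ b) {k n : ℕ} :
    k ∈ domset b n ↔ ∀ i, dig b k i ≤ dig b n i := by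
  classical
  constructor
  · intro h
    have := (Finset.mem_filter.mp h).2
    simpa using this
  · intro h
    refine Finset.mem_filter.mpr ⟨Finset.mem_range.mpr ?_, by simpa using h⟩
    exact Nat.lt_succ_of_le (le_of_dom hb _ _ h)

lemma le_of_mem_domset {k n : ℕ} (h : k ∈ domset b n) : k ≤ n := by
  classical
  have := (Finset.mem_filter.mp h).1
  exact Nat.lt_succ_iff.mp (Finset.mem_range.mp this)

lemma uz_zero : uz b 0 = 0 := by simp [uz]

lemma uz_mul_add (hb : 2 ≤ b) (j s : ℕ) (hs : s < b) :
    uz b (b * j + s) = uz b j + (s : ZMod b) := by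
  rcases Nat.eq_zero_or_pos (b * j + s) with h0 | hpos
  · have hj : j = 0 := by
      rcases Nat.eq_zero_or_pos j with rfl | hj'
      · rfl
      · exfalso; nlinarith
    have hs0 : s = 0 := by omega
    subst hj; subst hs0; simp [uz_zero]
  · rw [uz, Nat.digits_def' (by omega : 1 < b) hpos]
    have hm : (b * j + s) % b = s := by
      rw [Nat.mul_add_mod, Nat.mod_eq_of_lt hs]
    have hd : (b * j + s) / b = j := by
      rw [Nat.mul_add_div (by omega), Nat.div_eq_of_lt hs, Nat.add_zero]
    rw [hm, hd, List.sum_cons, Nat.cast_add, uz]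
    ring

lemma uz_add_pow (hb : 2 ≤ b) : ∀ (N k e : ℕ), k < b ^ N → e < b →
    uz b (k + e * b ^ N) = uz b k + (e : ZMod b) := by
  intro N
  induction N with
  | zero =>
    intro k e hk he
    rw [pow_zero] at hk
    obtain rfl : k = 0 := by omega
    rcases Nat.eq_zero_or_pos e with rfl | hpos
    · simp [uz_zero]
    · rw [pow_zero, mul_one, Nat.zero_add, uz_zero, zero_add, uz,
        Nat.digits_def' (by omega : 1 < b) hpos,
        Nat.mod_eq_of_lt he, Nat.div_eq_of_lt he]
      simp
  | succ N ih =>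
    intro k e hk he
    have hr : k % b < b := Nat.mod_lt _ (by omega)
    have hq : k / b < b ^ N := by
      rw [Nat.div_lt_iff_lt_mul (by omega)]
      calc k < b ^ (N + 1) := hk
        _ = b ^ N * b := by rw [pow_succ]
    have hdm := Nat.div_add_mod k b
    have key : k + e * b ^ (N + 1) = b * (k / b + e * b ^ N) + k % b := by
      calc k + e * b ^ (N + 1) = (b * (k / b) + k % b) + e * (b * b ^ N) := by
            rw [hdm, pow_succ']
        _ = b * (k / b + e * b ^ N) + k % b := by ring
    rw [key, uz_mul_add hb _ _ hr, ih (k / b) e hq he]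
    rw [show uz b k = uz b (b * (k / b) + k % b) by rw [hdm],
      uz_mul_add hb _ _ hr]
    ring

lemma sum_range_natCast [NeZero b] (g : ZMod b → ℂ) :
    ∑ s ∈ Finset.range b, g (s : ZMod b) = ∑ z : ZMod b, g z := by
  refine Finset.sum_nbij' (fun s => (s : ZMod b)) (fun z => z.val) ?_ ?_ ?_ ?_ ?_
  · intro s _; exact Finset.mem_univ _
  · intro z _; exact Finset.mem_range.mpr (ZMod.val_lt z)
  · intro s hs; exact ZMod.val_natCast_of_lt (Finset.mem_range.mp hs)
  · intro z _; exact ZMod.natCast_rightInverse z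
  · intro s _; rfl

lemma sum_shift_zero [NeZero b] (A : ZMod b → ℂ) (hA : ∑ z, A z = 0) (t : ZMod b) :
    ∑ s ∈ Finset.range b, A (t + (s : ZMod b)) = 0 := by
  rw [sum_range_natCast (fun z => A (t + z)), ← hA]
  exact Fintype.sum_equiv (Equiv.addLeft t) _ _ (fun z => rfl)

lemma sh_sum_zero [NeZero b] (A : ZMod b → ℂ) (hA : ∑ z, A z = 0) (e : ℕ) :
    ∑ z, sh e A z = 0 := by
  rw [← hA]
  exact Fintype.sum_equiv (Equiv.addRight (e : ZMod b)) _ _ (fun z => rfl)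

lemma dig_add_mul_pow_lt (k e N i : ℕ) (hb : 2 ≤ b) (hiN : i < N) :
    dig b (k + e * b ^ N) i = dig b k i := by
  obtain ⟨j, rfl⟩ : ∃ j, N = i + (j + 1) := ⟨N - i - 1, by omega⟩
  have hpow : b ^ (i + (j + 1)) = b ^ j * b * b ^ i := by ring
  rw [dig, dig, hpow, show k + e * (b ^ j * b * b ^ i) = k + e * (b ^ j * b) * b ^ i by ring,
    Nat.add_mul_div_right _ _ (by positivity : 0 < b ^ i),
    show k / b ^ i + e * (b ^ j * b) = k / b ^ i + e * b ^ j * b by ring,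
    Nat.add_mul_mod_self_right]

lemma dig_add_mul_pow_self (k e N : ℕ) (hb : 2 ≤ b) (hk : k < b ^ N) (he : e < b) :
    dig b (k + e * b ^ N) N = e := by
  rw [dig, Nat.add_mul_div_right _ _ (by positivity : 0 < b ^ N),
    Nat.div_eq_of_lt hk, Nat.zero_add, Nat.mod_eq_of_lt he]

lemma lt_pow_succ (hb : 2 ≤ b) {k e N : ℕ} (hk : k < b ^ N) (he : e < b) :
    k + e * b ^ N < b ^ (N + 1) := by
  have h1 : e * b ^ N ≤ (b - 1) * b ^ N := Nat.mul_le_mul_right _ (by omega)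
  have h2 : b ^ (N + 1) = b * b ^ N := by rw [pow_succ']
  have h3 : 0 < b ^ N := by positivity
  nlinarith

lemma domset_sum_top {M : Type*} [AddCommMonoid M] (hb : 2 ≤ b) {N n d : ℕ}
    (hn : n < b ^ N) (hd : d < b) (f : ℕ → M) :
    ∑ k ∈ domset b (n + d * b ^ N), f k
      = ∑ e ∈ Finset.range (d + 1), ∑ k ∈ domset b n, f (k + e * b ^ N) := by
  rw [← Finset.sum_product']
  refine (Finset.sum_nbij' (fun p : ℕ × ℕ => p.2 + p.1 * b ^ N)
    (fun k' => (k' / b ^ N, k' % b ^ N)) ?_ ?_ ?_ ?_ ?_).symm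
  · rintro ⟨e, k⟩ hp
    dsimp only
    obtain ⟨he, hk⟩ := Finset.mem_product.mp hp
    have he' : e ≤ d := Nat.lt_succ_iff.mp (Finset.mem_range.mp he)
    have hkd := (mem_domset hb).mp hk
    have hkn : k < b ^ N := lt_of_le_of_lt (le_of_mem_domset hk) hn
    refine (mem_domset hb).mpr (fun i => ?_)
    rcases lt_trichotomy i N with hi | rfl | hi
    · rw [dig_add_mul_pow_lt _ _ _ _ hb hi, dig_add_mul_pow_lt _ _ _ _ hb hi]
      exact hkd i
    · rw [dig_add_mul_pow_self _ _ _ hb hkn (by omega),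
        dig_add_mul_pow_self _ _ _ hb hn hd]
      exact he'
    · have hbig1 : k + e * b ^ N < b ^ i :=
        lt_of_lt_of_le (lt_pow_succ hb hkn (by omega)) (Nat.pow_le_pow_right (by omega) hi)
      have hbig2 : n + d * b ^ N < b ^ i :=
        lt_of_lt_of_le (lt_pow_succ hb hn hd) (Nat.pow_le_pow_right (by omega) hi)
      rw [dig_of_lt hbig1, dig_of_lt hbig2]
  · intro k' hk'
    have hdom := (mem_domset hb).mp hk'
    have hpN : 0 < b ^ N := by positivity
    have hub : k' < b ^ (N + 1) :=
      lt_of_le_of_lt (le_of_mem_domset hk') (lt_pow_succ hb hn hd)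
    have hdiv : k' / b ^ N < b := by
      rw [Nat.div_lt_iff_lt_mul hpN]
      calc k' < b ^ (N + 1) := hub
        _ = b * b ^ N := by rw [pow_succ']
    have hquot : k' / b ^ N ≤ d := by
      have h1 : dig b k' N = k' / b ^ N := by
        rw [dig, Nat.mod_eq_of_lt hdiv]
      have h2 := hdom N
      rw [h1, dig_add_mul_pow_self _ _ _ hb hn hd] at h2
      exact h2
    refine Finset.mem_product.mpr ⟨Finset.mem_range.mpr (by omega), ?_⟩
    refine (mem_domset hb).mpr (fun i => ?_)
    have hmod : k' % b ^ N < b ^ N := Nat.mod_lt _ hpN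
    rcases lt_or_ge i N with hi | hi
    · have hrw : k' % b ^ N + (k' / b ^ N) * b ^ N = k' := Nat.mod_add_div' k' (b ^ N)
      have e1 : dig b k' i = dig b (k' % b ^ N) i := by
        conv_lhs => rw [← hrw]
        rw [dig_add_mul_pow_lt _ _ _ _ hb hi]
      have e2 : dig b (n + d * b ^ N) i = dig b n i :=
        dig_add_mul_pow_lt _ _ _ _ hb hi
      have := hdom i
      rw [e1, e2] at this
      exact this
    · rw [dig_of_lt (lt_of_lt_of_le hmod (Nat.pow_le_pow_right (by omega) hi))]
      exact Nat.zero_le _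
  · rintro ⟨e, k⟩ hp
    dsimp only
    obtain ⟨he, hk⟩ := Finset.mem_product.mp hp
    have hkn : k < b ^ N := lt_of_le_of_lt (le_of_mem_domset hk) hn
    have h1 : (k + e * b ^ N) / b ^ N = e := by
      rw [Nat.add_mul_div_right _ _ (by positivity : 0 < b ^ N), Nat.div_eq_of_lt hkn,
        Nat.zero_add]
    have h2 : (k + e * b ^ N) % b ^ N = k := by
      rw [Nat.add_mul_mod_self_right, Nat.mod_eq_of_lt hkn]
    rw [h1, h2]
  · intro k' _
    dsimp only
    exact Nat.mod_add_div' k' (b ^ N)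
  · rintro ⟨e, k⟩ _
    rfl

lemma domset_sum_bot {M : Type*} [AddCommMonoid M] (hb : 2 ≤ b) (n : ℕ) (f : ℕ → M) :
    ∑ k ∈ domset b n, f k
      = ∑ s ∈ Finset.range (n % b + 1), ∑ j ∈ domset b (n / b), f (b * j + s) := by
  have hb0 : 0 < b := by omega
  rw [← Finset.sum_product']
  refine (Finset.sum_nbij' (fun p : ℕ × ℕ => b * p.2 + p.1)
    (fun k => (k % b, k / b)) ?_ ?_ ?_ ?_ ?_).symm
  · rintro ⟨s, j⟩ hp
    dsimp only
    obtain ⟨hs, hj⟩ := Finset.mem_product.mp hp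
    have hs' : s ≤ n % b := Nat.lt_succ_iff.mp (Finset.mem_range.mp hs)
    have hsb : s < b := lt_of_le_of_lt hs' (Nat.mod_lt _ hb0)
    have hjd := (mem_domset hb).mp hj
    refine (mem_domset hb).mpr (fun i => ?_)
    cases i with
    | zero =>
      rw [dig_zero, dig_zero, Nat.mul_add_mod, Nat.mod_eq_of_lt hsb]
      exact hs'
    | succ i =>
      rw [dig_succ, dig_succ]
      have : (b * j + s) / b = j := by
        rw [Nat.mul_add_div hb0, Nat.div_eq_of_lt hsb, Nat.add_zero]
      rw [this]
      exact hjd i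
  · intro k hk
    have hdom := (mem_domset hb).mp hk
    refine Finset.mem_product.mpr ⟨Finset.mem_range.mpr ?_, ?_⟩
    · have := hdom 0
      rw [dig_zero, dig_zero] at this
      omega
    · refine (mem_domset hb).mpr (fun i => ?_)
      have := hdom (i + 1)
      rw [dig_succ, dig_succ] at this
      exact this
  · rintro ⟨s, j⟩ hp
    dsimp only
    obtain ⟨hs, hj⟩ := Finset.mem_product.mp hp
    have hs' : s ≤ n % b := Nat.lt_succ_iff.mp (Finset.mem_range.mp hs)
    have hsb : s < b := lt_of_le_of_lt hs' (Nat.mod_lt _ hb0)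
    have h1 : (b * j + s) % b = s := by rw [Nat.mul_add_mod, Nat.mod_eq_of_lt hsb]
    have h2 : (b * j + s) / b = j := by
      rw [Nat.mul_add_div hb0, Nat.div_eq_of_lt hsb, Nat.add_zero]
    rw [h1, h2]
  · intro k _
    dsimp only
    exact Nat.div_add_mod k b
  · rintro ⟨s, j⟩ _
    rfl

/-- `cf b A n = ∑_{k ⪯ n} A (u_b k)` -/
noncomputable def cf (b : ℕ) (A : ZMod b → ℂ) (n : ℕ) : ℂ := ∑ k ∈ domset b n, A (uz b k)

lemma cf_zero (A : ZMod b → ℂ) : cf b A 0 = A 0 := by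
  classical
  have : domset b 0 = {0} := by
    apply Finset.ext
    intro k
    simp only [domset, Finset.mem_filter, Finset.mem_range, Finset.mem_singleton]
    constructor
    · rintro ⟨h, _⟩; omega
    · rintro rfl; exact ⟨by omega, fun i => le_refl _⟩
  rw [cf, this, Finset.sum_singleton, uz_zero]

lemma cf_top (hb : 2 ≤ b) (A : ZMod b → ℂ) {N n d : ℕ} (hn : n < b ^ N) (hd : d < b) :
    cf b A (n + d * b ^ N) = ∑ e ∈ Finset.range (d + 1), cf b (sh e A) n := by
  rw [cf, domset_sum_top hb hn hd]
  refine Finset.sum_congr rfl (fun e he => ?_)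
  refine Finset.sum_congr rfl (fun k hk => ?_)
  have hkn : k < b ^ N := lt_of_le_of_lt (le_of_mem_domset hk) hn
  have heb : e < b := by
    have := Finset.mem_range.mp he; omega
  rw [uz_add_pow hb N k e hkn heb]
  rfl

lemma cf_bot (hb : 2 ≤ b) (A : ZMod b → ℂ) (n : ℕ) :
    cf b A n = ∑ s ∈ Finset.range (n % b + 1), cf b (sh s A) (n / b) := by
  rw [cf, domset_sum_bot hb]
  refine Finset.sum_congr rfl (fun s hs => ?_)
  refine Finset.sum_congr rfl (fun j hj => ?_)
  have hsb : s < b := by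
    have := Finset.mem_range.mp hs
    have := Nat.mod_lt n (show 0 < b by omega)
    omega
  rw [uz_mul_add hb j s hsb]
  rfl

lemma cf_eq_zero [NeZero b] (hb : 2 ≤ b) :
    ∀ n : ℕ, ∀ A : ZMod b → ℂ, (∑ z, A z = 0) → (∃ i, dig b n i = b - 1) → cf b A n = 0 := by
  intro n
  induction n using Nat.strong_induction_on with
  | _ n ih =>
    rintro A hA ⟨i, hi⟩
    rcases Nat.eq_zero_or_pos n with rfl | hn
    · exfalso
      rw [dig, Nat.zero_div, Nat.zero_mod] at hi
      omega
    rw [cf_bot hb]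
    cases i with
    | zero =>
      rw [dig_zero] at hi
      rw [hi, show b - 1 + 1 = b by omega]
      simp only [cf]
      rw [Finset.sum_comm]
      refine Finset.sum_eq_zero (fun j _ => ?_)
      simpa [sh] using sum_shift_zero A hA (uz b j)
    | succ i =>
      refine Finset.sum_eq_zero (fun s _ => ?_)
      refine ih (n / b) (Nat.div_lt_self hn (by omega)) (sh s A) (sh_sum_zero A hA s) ⟨i, ?_⟩
      rw [← dig_succ]
      exact hi

lemma telescope {R : Type*} [CommRing R] (f : ℕ → R) (y : R) :
    ∀ n : ℕ, (∑ d ∈ Finset.range n, y ^ d * (∑ e ∈ Finset.range (d + 1), f e)) * (1 - y)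
      + y ^ n * (∑ e ∈ Finset.range (n + 1), f e)
      = ∑ d ∈ Finset.range (n + 1), y ^ d * f d := by
  intro n
  induction n with
  | zero => simp
  | succ n ih =>
    simp only [Finset.sum_range_succ] at ih ⊢
    linear_combination ih

lemma telescope' {R : Type*} [CommRing R] (f : ℕ → R) (y : R) (m : ℕ)
    (h : ∑ e ∈ Finset.range (m + 1), f e = 0) :
    (∑ d ∈ Finset.range (m + 1), y ^ d * (∑ e ∈ Finset.range (d + 1), f e)) * (1 - y)
      = ∑ d ∈ Finset.range (m + 1), y ^ d * f d := by
  have ht := telescope f y m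
  rw [h, mul_zero, add_zero] at ht
  rw [Finset.sum_range_succ, h, mul_zero, add_zero]
  exact ht

lemma sum_range_mul_split {M : Type*} [AddCommMonoid M] (p q : ℕ) (f : ℕ → M) :
    ∑ n ∈ Finset.range (q * p), f n
      = ∑ d ∈ Finset.range q, ∑ n ∈ Finset.range p, f (n + d * p) := by
  induction q with
  | zero => simp
  | succ q ih =>
    rw [Finset.sum_range_succ, ← ih, show (q + 1) * p = q * p + p by ring,
      Finset.sum_range_add]
    congr 1
    refine Finset.sum_congr rfl (fun n _ => ?_)
    rw [Nat.add_comm (q * p) n]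

lemma main_poly [NeZero b] (hb : 2 ≤ b) : ∀ N : ℕ, ∀ A : ZMod b → ℂ, (∑ z, A z = 0) →
    (∑ n ∈ Finset.range (b ^ N), Polynomial.C (A (uz b n)) * Polynomial.X ^ n)
      = (∑ n ∈ Finset.range (b ^ N), Polynomial.C (cf b A n) * Polynomial.X ^ n)
        * ∏ m ∈ Finset.range N, (1 - Polynomial.X ^ b ^ m) := by
  intro N
  induction N with
  | zero =>
    intro A hA
    simp [cf_zero, uz_zero]
  | succ N ihN =>
    intro A hA
    have hpow : b ^ (N + 1) = b * b ^ N := by rw [pow_succ']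
    -- LHS decomposition
    have hL : (∑ n ∈ Finset.range (b ^ (N + 1)), Polynomial.C (A (uz b n)) * Polynomial.X ^ n)
        = ∑ d ∈ Finset.range b, (Polynomial.X ^ b ^ N) ^ d *
            ∑ n ∈ Finset.range (b ^ N), Polynomial.C ((sh d A) (uz b n)) * Polynomial.X ^ n := by
      rw [hpow, sum_range_mul_split]
      refine Finset.sum_congr rfl (fun d hd => ?_)
      rw [Finset.mul_sum]
      refine Finset.sum_congr rfl (fun n hn => ?_)
      rw [uz_add_pow hb N n d (Finset.mem_range.mp hn) (Finset.mem_range.mp hd)]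
      simp only [sh]
      rw [show n + d * b ^ N = n + b ^ N * d by ring, pow_add, pow_mul]
      ring
    -- middle decomposition
    have hQ : (∑ n ∈ Finset.range (b ^ (N + 1)), Polynomial.C (cf b A n) * Polynomial.X ^ n)
        = ∑ d ∈ Finset.range b, (Polynomial.X ^ b ^ N) ^ d *
            ∑ n ∈ Finset.range (b ^ N),
              Polynomial.C (∑ e ∈ Finset.range (d + 1), cf b (sh e A) n) * Polynomial.X ^ n := by
      rw [hpow, sum_range_mul_split]
      refine Finset.sum_congr rfl (fun d hd => ?_)
      rw [Finset.mul_sum]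
      refine Finset.sum_congr rfl (fun n hn => ?_)
      rw [cf_top hb A (Finset.mem_range.mp hn) (Finset.mem_range.mp hd)]
      rw [show n + d * b ^ N = n + b ^ N * d by ring, pow_add, pow_mul]
      ring
    -- push the product R_N inside
    have hRin : (∑ d ∈ Finset.range b, (Polynomial.X ^ b ^ N) ^ d *
            ∑ n ∈ Finset.range (b ^ N),
              Polynomial.C (∑ e ∈ Finset.range (d + 1), cf b (sh e A) n) * Polynomial.X ^ n)
          * ∏ m' ∈ Finset.range N, (1 - Polynomial.X ^ b ^ m')
        = ∑ d ∈ Finset.range b, (Polynomial.X ^ b ^ N) ^ d *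
            ∑ e ∈ Finset.range (d + 1),
              ∑ n ∈ Finset.range (b ^ N), Polynomial.C ((sh e A) (uz b n)) * Polynomial.X ^ n := by
      rw [Finset.sum_mul]
      refine Finset.sum_congr rfl (fun d _ => ?_)
      rw [mul_assoc]
      congr 1
      have hsw : (∑ n ∈ Finset.range (b ^ N),
              Polynomial.C (∑ e ∈ Finset.range (d + 1), cf b (sh e A) n) * Polynomial.X ^ n)
          = ∑ e ∈ Finset.range (d + 1),
              ∑ n ∈ Finset.range (b ^ N), Polynomial.C (cf b (sh e A) n) * Polynomial.X ^ n := by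
        have : (∑ n ∈ Finset.range (b ^ N),
                Polynomial.C (∑ e ∈ Finset.range (d + 1), cf b (sh e A) n) * Polynomial.X ^ n)
            = ∑ n ∈ Finset.range (b ^ N), ∑ e ∈ Finset.range (d + 1),
                Polynomial.C (cf b (sh e A) n) * Polynomial.X ^ n :=
          Finset.sum_congr rfl (fun n _ => by rw [map_sum, Finset.sum_mul])
        rw [this, Finset.sum_comm]
      rw [hsw, Finset.sum_mul]
      refine Finset.sum_congr rfl (fun e _ => ?_)
      exact (ihN (sh e A) (sh_sum_zero A hA e)).symm
    rw [hL, hQ, Finset.prod_range_succ, ← mul_assoc, hRin]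
    obtain ⟨m, rfl⟩ : ∃ m, b = m + 1 := ⟨b - 1, by omega⟩
    have hzero : ∑ e ∈ Finset.range (m + 1), ∑ n ∈ Finset.range ((m + 1) ^ N),
        Polynomial.C ((sh e A) (uz (m + 1) n)) * Polynomial.X ^ n = 0 := by
      rw [Finset.sum_comm]
      refine Finset.sum_eq_zero (fun n _ => ?_)
      rw [← Finset.sum_mul, ← map_sum]
      have h0 : (∑ e ∈ Finset.range (m + 1), (sh e A) (uz (m + 1) n)) = 0 := by
        simpa [sh] using sum_shift_zero A hA (uz (m + 1) n)
      rw [h0, map_zero, zero_mul]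
    exact (telescope' (fun e => ∑ n ∈ Finset.range ((m + 1) ^ N),
      Polynomial.C ((sh e A) (uz (m + 1) n)) * Polynomial.X ^ n)
      (Polynomial.X ^ (m + 1) ^ N) m hzero).symm

end PtmAux

open Classical in
/-- For `b ≥ 2`, `N ≥ 1` and a zero-sum vector `A = (a_0, …, a_{b-1})` of complex numbers,
let `c_n := ∑_{k ⪯ n} a_{u_b(k)}` (the sum over all `k` digitally dominated by `n` in base `b`).
Then (i) `∑_{n<b^N} a_{u_b(n)} x^n = (∑_{n<b^N} c_n x^n) · ∏_{m<N} (1 - x^{b^m})` as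
polynomials, and (ii) `c_n = 0` for every `n` whose base-`b` expansion contains the
digit `b-1`. -/
theorem ptm_coefficient_formula (b N : ℕ) (hb : 2 ≤ b) (hN : 1 ≤ N)
    (a : Fin b → ℂ) (ha : ∑ i, a i = 0) (c : ℕ → ℂ)
    (hc : ∀ n, c n =
      ∑ k ∈ (Finset.range (n + 1)).filter (fun k => ∀ i, dig b k i ≤ dig b n i),
        a ⟨ptm b k, Nat.mod_lt _ (by omega)⟩) :
    ((∑ n ∈ Finset.range (b ^ N),
        Polynomial.C (a ⟨ptm b n, Nat.mod_lt _ (by omega)⟩) * Polynomial.X ^ n) =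
      (∑ n ∈ Finset.range (b ^ N), Polynomial.C (c n) * Polynomial.X ^ n) *
        ∏ m ∈ Finset.range N, (1 - Polynomial.X ^ b ^ m)) ∧
    ∀ n : ℕ, (∃ i, dig b n i = b - 1) → c n = 0 := by
  haveI : NeZero b := ⟨by omega⟩
  set A : ZMod b → ℂ := fun z => a ⟨z.val, ZMod.val_lt z⟩ with hAdef
  have key : ∀ k (h : ptm b k < b), a ⟨ptm b k, h⟩ = A (PtmAux.uz b k) := by
    intro k h
    have hval : (PtmAux.uz b k).val = ptm b k := by
      unfold PtmAux.uz ptm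
      rw [ZMod.val_natCast]
    simp only [hAdef]
    congr 1
    exact Fin.ext hval.symm
  have hA : ∑ z, A z = 0 := by
    rw [← ha]
    refine Finset.sum_nbij' (fun z : ZMod b => (⟨z.val, ZMod.val_lt z⟩ : Fin b))
      (fun i : Fin b => (i.val : ZMod b)) ?_ ?_ ?_ ?_ ?_
    · intro z _; exact Finset.mem_univ _
    · intro i _; exact Finset.mem_univ _
    · intro z _; exact ZMod.natCast_rightInverse z
    · intro i _
      refine Fin.ext ?_
      simp [ZMod.val_natCast, Nat.mod_eq_of_lt i.isLt]
    · intro z _; rfl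
  have hcA : ∀ n, c n = PtmAux.cf b A n := by
    intro n
    rw [hc n, PtmAux.cf, PtmAux.domset]
    exact Finset.sum_congr rfl (fun k _ => key k _)
  constructor
  · have e1 : (∑ n ∈ Finset.range (b ^ N),
        Polynomial.C (a ⟨ptm b n, Nat.mod_lt _ (by omega)⟩) * Polynomial.X ^ n)
        = ∑ n ∈ Finset.range (b ^ N), Polynomial.C (A (PtmAux.uz b n)) * Polynomial.X ^ n :=
      Finset.sum_congr rfl (fun n _ => by exact congrArg (fun x => Polynomial.C x * Polynomial.X ^ n) (key n _))
    have e2 : (∑ n ∈ Finset.range (b ^ N), Polynomial.C (c n) * Polynomial.X ^ n)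
        = ∑ n ∈ Finset.range (b ^ N), Polynomial.C (PtmAux.cf b A n) * Polynomial.X ^ n :=
      Finset.sum_congr rfl (fun n _ => by rw [hcA n])
    rw [e1, e2]
    exact PtmAux.main_poly hb N A hA
  · intro n hn
    rw [hcA n]
    exact PtmAux.cf_eq_zero hb n A hA hn
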